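/- arXiv:2408.06330 — 4 statements merged into one kernel-verified Lean document; each statement's English description precedes it below -/
import Mathlib

section
/- For every e ∈ E and every x ∈ X, one has x + e ≠ 0 and φ_e(x) ∈ X; that is, each map φ_e maps X into itself. -/
/-- The alphabet of the `n`-dimensional continued fraction system: vectors whose first
coordinate is a positive integer and whose remaining coordinates are integers. -/
def cfAlphabet (n : ℕ) [NeZero n] : Set (EuclideanSpace ℝ (Fin n)) :=
  {e | (∃ k : ℕ, 0 < k ∧ e 0 = k) ∧ ∀ i : Fin n, i ≠ 0 → ∃ m : ℤ, e i = m}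

/-- The center `v_{1/2} = (1/2, 0, …, 0)`. -/
noncomputable def cfCenter (n : ℕ) [NeZero n] : EuclideanSpace ℝ (Fin n) :=
  WithLp.toLp 2 (fun i => if i = 0 then (1/2 : ℝ) else 0)

/-- The generator `φ_e(x) = (x + e)/|x + e|²`. -/
noncomputable def cfMap {n : ℕ} (e : EuclideanSpace ℝ (Fin n)) (x : EuclideanSpace ℝ (Fin n)) :
    EuclideanSpace ℝ (Fin n) :=
  (‖x + e‖ ^ 2)⁻¹ • (x + e)

/-- For every `e ∈ E` and every `x ∈ X = B̄(v_{1/2}, 1/2)`, one has `x + e ≠ 0` and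
`φ_e(x) ∈ X`; that is, each `φ_e` maps `X` into itself. -/
theorem cfMap_mapsTo_ball {n : ℕ} [NeZero n] (hn : 2 ≤ n)
    (e : EuclideanSpace ℝ (Fin n)) (he : e ∈ cfAlphabet n)
    (x : EuclideanSpace ℝ (Fin n)) (hx : ‖x - cfCenter n‖ ≤ 1/2) :
    x + e ≠ 0 ∧ ‖cfMap e x - cfCenter n‖ ≤ 1/2 := by
  obtain ⟨⟨k, hk, hek⟩, -⟩ := he
  set v := cfCenter n with hv
  have hinner : ∀ y : EuclideanSpace ℝ (Fin n), (inner ℝ y v : ℝ) = y 0 * (1/2 : ℝ) := by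
    intro y
    rw [PiLp.inner_apply]
    rw [Finset.sum_eq_single 0]
    · simp [hv, cfCenter, mul_comm]
    · intro i _ hi; simp [hv, cfCenter, hi]
    · simp
  have hvv : ‖v‖ ^ 2 = 1/4 := by
    rw [← real_inner_self_eq_norm_sq, hinner]
    simp [hv, cfCenter]; norm_num
  have hxsq : ‖x‖ ^ 2 ≤ x 0 := by
    have h1 : ‖x - v‖ ^ 2 ≤ (1/2) ^ 2 := pow_le_pow_left₀ (norm_nonneg _) hx 2
    rw [norm_sub_sq_real, hinner, hvv] at h1
    nlinarith
  have hx0 : (0 : ℝ) ≤ x 0 := le_trans (sq_nonneg _) hxsq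
  have he0 : (1 : ℝ) ≤ e 0 := by
    rw [hek]; exact_mod_cast hk
  have hy0 : (1 : ℝ) ≤ (x + e) 0 := by
    have : (x + e) 0 = x 0 + e 0 := rfl
    rw [this]; linarith
  have hyne : x + e ≠ 0 := by
    intro h
    have : (x + e) 0 = 0 := by rw [h]; rfl
    rw [this] at hy0; linarith
  refine ⟨hyne, ?_⟩
  have hynorm : (0 : ℝ) < ‖x + e‖ ^ 2 := pow_pos (norm_pos_iff.mpr hyne) 2
  set c : ℝ := (‖x + e‖ ^ 2)⁻¹ with hc
  have hcpos : 0 < c := inv_pos.mpr hynorm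
  have hcn : ‖c • (x + e)‖ ^ 2 = c := by
    rw [norm_smul, mul_pow, Real.norm_eq_abs, sq_abs, hc]
    field_simp
  have hgoal : ‖cfMap e x - v‖ ^ 2 ≤ (1/2) ^ 2 := by
    have : cfMap e x = c • (x + e) := rfl
    rw [this, norm_sub_sq_real, hcn, hvv, real_inner_smul_left, hinner]
    have h2 : c ≤ c * ((x + e) 0) := le_mul_of_one_le_right hcpos.le hy0
    nlinarith
  nlinarith [norm_nonneg (cfMap e x - v)]
end

section
/- For any two distinct elements e₁, e₂ ∈ E, the images of the interior of X under φ_{e₁} and φ_{e₂} are disjoint: φ_{e₁}(Int(X)) ∩ φ_{e₂}(Int(X)) = ∅. -/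
private lemma cfInv_eq_zero_iff {n : ℕ} (w : EuclideanSpace ℝ (Fin n)) :
    (‖w‖ ^ 2)⁻¹ • w = 0 ↔ w = 0 := by
  constructor
  · intro h
    rcases smul_eq_zero.1 h with h | h
    · have : ‖w‖ = 0 := by
        by_contra hw
        exact (inv_ne_zero (pow_ne_zero 2 hw)) h
      simpa using norm_eq_zero.1 this
    · exact h
  · intro h; simp [h]

private lemma cfInv_injective {n : ℕ} (w w' : EuclideanSpace ℝ (Fin n))
    (h : (‖w‖ ^ 2)⁻¹ • w = (‖w'‖ ^ 2)⁻¹ • w') : w = w' := by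
  by_cases hw : w = 0
  · subst hw
    simp only [norm_zero, smul_zero] at h
    symm
    exact (cfInv_eq_zero_iff w').1 (by simpa using h.symm)
  by_cases hw' : w' = 0
  · subst hw'
    simp only [norm_zero, smul_zero] at h
    exact (cfInv_eq_zero_iff w).1 (by simpa using h)
  have hnw : ‖w‖ ≠ 0 := norm_ne_zero_iff.2 hw
  have hnw' : ‖w'‖ ≠ 0 := norm_ne_zero_iff.2 hw'
  -- norms of both sides agree
  have hnorm : ‖w‖⁻¹ = ‖w'‖⁻¹ := by
    have := congrArg norm h
    rw [norm_smul, norm_smul] at this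
    simp only [norm_inv, norm_pow, norm_norm] at this
    field_simp at this
    -- this : ‖w‖ * ‖w'‖^2 = ‖w'‖ * ‖w‖^2  (or similar); derive ‖w‖ = ‖w'‖
    have h3 : ‖w‖ * ‖w'‖ * (‖w'‖ - ‖w‖) = 0 := by linear_combination (‖w‖ * ‖w'‖) * this
    have h4 : ‖w'‖ - ‖w‖ = 0 := by
      rcases mul_eq_zero.1 h3 with h5 | h5
      · exact absurd h5 (mul_ne_zero hnw hnw')
      · exact h5
    have h2 : ‖w‖ = ‖w'‖ := by linarith
    rw [h2]
  have h2 : ‖w‖ = ‖w'‖ := by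
    have := congrArg (·⁻¹) hnorm
    simpa using this
  have := congrArg (fun z => (‖w‖ ^ 2 : ℝ) • z) h
  simp only [smul_smul] at this
  rw [mul_inv_cancel₀ (pow_ne_zero 2 hnw), one_smul, h2,
    mul_inv_cancel₀ (pow_ne_zero 2 hnw'), one_smul] at this
  exact this

private lemma abs_apply_le_norm {n : ℕ} (w : EuclideanSpace ℝ (Fin n)) (i : Fin n) :
    |w i| ≤ ‖w‖ := by
  rw [EuclideanSpace.norm_eq]
  have : |w i| = Real.sqrt (w i ^ 2) := by
    rw [Real.sqrt_sq_eq_abs]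
  rw [this]
  apply Real.sqrt_le_sqrt
  have := Finset.single_le_sum (f := fun j => w j ^ 2)
    (fun j _ => sq_nonneg (w j)) (Finset.mem_univ i)
  simpa [sq_abs] using this

private lemma coord_int {n : ℕ} [NeZero n] {e : EuclideanSpace ℝ (Fin n)}
    (he : e ∈ cfAlphabet n) (i : Fin n) : ∃ m : ℤ, e i = m := by
  by_cases hi : i = 0
  · obtain ⟨k, _, hk⟩ := he.1
    exact ⟨(k : ℤ), by rw [hi, hk]; push_cast; ring⟩
  · exact he.2 i hi

/-- For distinct `e₁, e₂ ∈ E`, the images of the interior of `X` (the open ball of radius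
`1/2` centered at `v_{1/2}`) under `φ_{e₁}` and `φ_{e₂}` are disjoint. -/
theorem cfMap_images_disjoint {n : ℕ} [NeZero n] (hn : 2 ≤ n)
    (e₁ e₂ : EuclideanSpace ℝ (Fin n)) (he₁ : e₁ ∈ cfAlphabet n) (he₂ : e₂ ∈ cfAlphabet n)
    (hne : e₁ ≠ e₂) :
    cfMap e₁ '' (Metric.ball (cfCenter n) (1/2)) ∩
      cfMap e₂ '' (Metric.ball (cfCenter n) (1/2)) = ∅ := by
  rw [Set.eq_empty_iff_forall_notMem]
  rintro z ⟨⟨x, hx, hx'⟩, ⟨y, hy, hy'⟩⟩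
  have key : x + e₁ = y + e₂ := by
    apply cfInv_injective
    rw [← cfMap, ← cfMap, hx', hy']
  -- hence e₂ - e₁ = x - y has norm < 1
  have hdiff : e₂ - e₁ = x - y := by
    rw [sub_eq_sub_iff_add_eq_add, key, add_comm]
  have hlt : ‖e₂ - e₁‖ < 1 := by
    rw [hdiff, ← dist_eq_norm]
    calc dist x y ≤ dist x (cfCenter n) + dist (cfCenter n) y := dist_triangle _ _ _
    _ < 1/2 + 1/2 := by
        have := Metric.mem_ball.1 hx
        have h2 := Metric.mem_ball.1 hy
        rw [dist_comm (cfCenter n) y]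
        linarith
    _ = 1 := by norm_num
  -- but e₂ - e₁ is a nonzero integer vector, so its norm is ≥ 1
  have hne' : e₂ - e₁ ≠ 0 := sub_ne_zero.2 (Ne.symm hne)
  obtain ⟨i, hi⟩ : ∃ i, (e₂ - e₁) i ≠ 0 := by
    by_contra h
    push_neg at h
    exact hne' (PiLp.ext h)
  obtain ⟨m₁, hm₁⟩ := coord_int he₁ i
  obtain ⟨m₂, hm₂⟩ := coord_int he₂ i
  have hci : (e₂ - e₁) i = ((m₂ - m₁ : ℤ) : ℝ) := by
    have : (e₂ - e₁) i = e₂ i - e₁ i := by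
      simp [PiLp.sub_apply]
    rw [this, hm₁, hm₂]; push_cast; ring
  have hmne : m₂ - m₁ ≠ 0 := by
    intro h
    apply hi
    rw [hci, h]; simp
  have h1le : (1 : ℝ) ≤ |(e₂ - e₁) i| := by
    rw [hci]
    rw [← Int.cast_abs]
    exact_mod_cast Int.one_le_abs hmne
  have := abs_apply_le_norm (e₂ - e₁) i
  linarith
end

section
/- For every z ∈ ℂ with |z| ≤ 0.2 one has |φ₁(z)| ≤ 0.154 < 0.2, |φ₂(z)| ≤ √2/10 + 0.042 < 0.2, and |φ₃(z)| ≤ √2/10 + 0.0216 < 0.2. In particular each φ_e, e = 1,2,3, maps X into X. -/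
open Complex

noncomputable def abcMap1 (z : ℂ) : ℂ := 0.25 * I * z + 0.1 + 0.1 * z ^ 2
noncomputable def abcMap2 (z : ℂ) : ℂ := 0.2 * I * z - 0.1 - 0.1 * I + 0.05 * z ^ 2
noncomputable def abcMap3 (z : ℂ) : ℂ := 0.1 * z + 0.1 - 0.1 * I + 0.04 * z ^ 2

lemma abs_ofReal' (r : ℝ) (hr : 0 ≤ r) : ‖((r : ℂ))‖ = r := by
  rw [Complex.norm_real, Real.norm_of_nonneg hr]

lemma sqrt2_lt : Real.sqrt 2 < 1.58 := by
  nlinarith [Real.sq_sqrt (by norm_num : (0:ℝ) ≤ 2), Real.sqrt_nonneg 2]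

lemma sqrt2_nonneg : (0:ℝ) ≤ Real.sqrt 2 := Real.sqrt_nonneg 2

lemma abs_key : ‖(-0.1 - 0.1 * I : ℂ)‖ = Real.sqrt 2 / 10 := by
  rw [Complex.norm_def]
  have h : Complex.normSq (-0.1 - 0.1 * I) = 2 / 100 := by
    simp [Complex.normSq_apply]
    norm_num
  rw [h, show (2:ℝ)/100 = 2 / 10^2 by norm_num,
    Real.sqrt_div (by norm_num : (0:ℝ) ≤ 2), Real.sqrt_sq (by norm_num : (0:ℝ) ≤ 10)]

/-- For every `z` with `|z| ≤ 0.2`: `|φ₁(z)| ≤ 0.154 < 0.2`,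
`|φ₂(z)| ≤ √2/10 + 0.042 < 0.2`, `|φ₃(z)| ≤ √2/10 + 0.0216 < 0.2`; in particular each
`φ_e` maps `X = {|z| ≤ 0.2}` into itself. -/
theorem abcMaps_mapsTo (z : ℂ) (hz : ‖z‖ ≤ 0.2) :
    (‖abcMap1 z‖ ≤ 0.154 ∧ (0.154 : ℝ) < 0.2) ∧
    (‖abcMap2 z‖ ≤ Real.sqrt 2 / 10 + 0.042 ∧ Real.sqrt 2 / 10 + 0.042 < 0.2) ∧
    (‖abcMap3 z‖ ≤ Real.sqrt 2 / 10 + 0.0216 ∧ Real.sqrt 2 / 10 + 0.0216 < 0.2) ∧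
    (‖abcMap1 z‖ ≤ 0.2 ∧ ‖abcMap2 z‖ ≤ 0.2 ∧
      ‖abcMap3 z‖ ≤ 0.2) := by
  have hz0 : 0 ≤ ‖z‖ := norm_nonneg z
  have hzz : ‖(z^2)‖ = (‖z‖)^2 := norm_pow _ _
  have hzz2 : (‖z‖)^2 ≤ 0.04 := by nlinarith
  have h1 : ‖(abcMap1 z)‖ ≤ 0.154 := by
    unfold abcMap1
    calc ‖(0.25 * I * z + 0.1 + 0.1 * z ^ 2)‖
        ≤ ‖(0.25 * I * z)‖ + ‖(0.1 : ℂ)‖ + ‖(0.1 * z ^ 2)‖ :=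
          le_trans (norm_add_le _ _) (by gcongr; exact norm_add_le _ _)
      _ = 0.25 * ‖z‖ + 0.1 + 0.1 * (‖z‖)^2 := by
          rw [norm_mul, norm_mul, norm_mul, norm_pow, Complex.norm_I,
            show (0.25:ℂ) = ((0.25:ℝ):ℂ) by norm_num,
            show (0.1:ℂ) = ((0.1:ℝ):ℂ) by norm_num,
            abs_ofReal' _ (by norm_num), abs_ofReal' _ (by norm_num)]
          ring
      _ ≤ 0.154 := by nlinarith
  have h2 : ‖(abcMap2 z)‖ ≤ Real.sqrt 2 / 10 + 0.042 := by
    have e : abcMap2 z = 0.2 * I * z + (-0.1 - 0.1 * I) + 0.05 * z ^ 2 := by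
      unfold abcMap2; ring
    rw [e]
    calc ‖(0.2 * I * z + (-0.1 - 0.1 * I) + 0.05 * z ^ 2)‖
        ≤ ‖(0.2 * I * z)‖ + ‖(-0.1 - 0.1 * I : ℂ)‖
            + ‖(0.05 * z ^ 2)‖ :=
          le_trans (norm_add_le _ _) (by gcongr; exact norm_add_le _ _)
      _ = 0.2 * ‖z‖ + Real.sqrt 2 / 10 + 0.05 * (‖z‖)^2 := by
          rw [norm_mul, norm_mul, norm_mul, norm_pow, Complex.norm_I, abs_key,
            show (0.2:ℂ) = ((0.2:ℝ):ℂ) by norm_num,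
            show (0.05:ℂ) = ((0.05:ℝ):ℂ) by norm_num,
            abs_ofReal' _ (by norm_num), abs_ofReal' _ (by norm_num)]
          ring
      _ ≤ Real.sqrt 2 / 10 + 0.042 := by nlinarith
  have h3 : ‖(abcMap3 z)‖ ≤ Real.sqrt 2 / 10 + 0.0216 := by
    have e : abcMap3 z = 0.1 * z + (-0.1 - 0.1 * I) * I + 0.04 * z ^ 2 := by
      unfold abcMap3; linear_combination (0.1:ℂ) * Complex.I_sq
    rw [e]
    calc ‖(0.1 * z + (-0.1 - 0.1 * I) * I + 0.04 * z ^ 2)‖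
        ≤ ‖(0.1 * z)‖ + ‖((-0.1 - 0.1 * I : ℂ) * I)‖
            + ‖(0.04 * z ^ 2)‖ :=
          le_trans (norm_add_le _ _) (by gcongr; exact norm_add_le _ _)
      _ = 0.1 * ‖z‖ + Real.sqrt 2 / 10 + 0.04 * (‖z‖)^2 := by
          rw [norm_mul, norm_mul, norm_mul, norm_pow, abs_key,
            show (0.1:ℂ) = ((0.1:ℝ):ℂ) by norm_num,
            show (0.04:ℂ) = ((0.04:ℝ):ℂ) by norm_num,
            Complex.norm_I,
            abs_ofReal' _ (by norm_num), abs_ofReal' _ (by norm_num)]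
          ring
      _ ≤ Real.sqrt 2 / 10 + 0.0216 := by nlinarith
  have hs := sqrt2_lt
  refine ⟨⟨h1, by norm_num⟩, ⟨h2, by nlinarith⟩, ⟨h3, by nlinarith⟩,
    by nlinarith, by nlinarith [sqrt2_nonneg], by nlinarith [sqrt2_nonneg]⟩
end

section
/- Each of the maps φ₁, φ₂, φ₃ is injective on X. Specifically, for all z ∈ X one has Re(−i φ₁′(z)) ≥ 0.21 > 0, Re(−i φ₂′(z)) ≥ 0.18 > 0, and Re(φ₃′(z)) ≥ 0.084 > 0, and each of these lower bounds on the real part of a fixed rotation of the derivative forces injectivity on the convex set X. -/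
open Complex Metric

/-- `X = {z : |z| ≤ 0.2}`. -/
noncomputable def abcX : Set ℂ := closedBall 0 0.2

lemma abc_memX {z : ℂ} (hz : z ∈ abcX) : ‖z‖ ≤ 0.2 := by
  simpa [abcX, Complex.dist_eq] using hz

lemma abc_im {z : ℂ} (hz : z ∈ abcX) : |z.im| ≤ 0.2 :=
  (Complex.abs_im_le_norm z).trans (abc_memX hz)

lemma abc_re {z : ℂ} (hz : z ∈ abcX) : |z.re| ≤ 0.2 :=
  (Complex.abs_re_le_norm z).trans (abc_memX hz)

lemma abc_d1 (z : ℂ) : deriv abcMap1 z = 0.25 * I + 0.2 * z := by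
  have h : HasDerivAt abcMap1 (0.25*I*1 + 0.1*((2:ℕ)*z^(2-1))) z :=
    (((hasDerivAt_id z).const_mul (0.25*I)).add_const 0.1).add ((hasDerivAt_pow 2 z).const_mul 0.1)
  rw [h.deriv]; push_cast [Complex.ofReal_div, Complex.ofReal_one, Complex.ofReal_ofNat]; ring

lemma abc_d2 (z : ℂ) : deriv abcMap2 z = 0.2 * I + 0.1 * z := by
  have h : HasDerivAt abcMap2 (0.2*I*1 + 0.05*((2:ℕ)*z^(2-1))) z :=
    ((((hasDerivAt_id z).const_mul (0.2*I)).sub_const 0.1).sub_const (0.1*I)).add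
      ((hasDerivAt_pow 2 z).const_mul 0.05)
  rw [h.deriv]; push_cast [Complex.ofReal_div, Complex.ofReal_one, Complex.ofReal_ofNat]; ring

lemma abc_d3 (z : ℂ) : deriv abcMap3 z = 0.1 + 0.08 * z := by
  have h : HasDerivAt abcMap3 (0.1*1 + 0.04*((2:ℕ)*z^(2-1))) z :=
    ((((hasDerivAt_id z).const_mul 0.1).add_const 0.1).sub_const (0.1*I)).add
      ((hasDerivAt_pow 2 z).const_mul 0.04)
  rw [h.deriv]; push_cast [Complex.ofReal_div, Complex.ofReal_one, Complex.ofReal_ofNat]; ring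

lemma abc_absC : ‖(0.25 : ℂ)‖ = 0.25 := by
  rw [show (0.25:ℂ) = ((0.25:ℝ):ℂ) by norm_num, Complex.norm_real]; norm_num

lemma abc_abs_small {c : ℝ} (hc : 0 ≤ c) : ‖((c : ℝ) : ℂ)‖ = c := by
  rw [Complex.norm_real, Real.norm_eq_abs, _root_.abs_of_nonneg hc]

lemma abc_inj (α β : ℝ) (c d : ℂ) (hα : 0 < α) (hβ : 0 ≤ β) (hsmall : β * 0.4 < α)
    (habs : ‖c‖ = α)
    (f : ℂ → ℂ) (hf : ∀ z, f z = c * z + d + (β : ℂ) * z ^ 2) :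
    Set.InjOn f abcX := by
  intro a ha b hb hab
  by_contra hne
  rw [hf a, hf b] at hab
  have key : (a - b) * (c + (β:ℂ) * (a + b)) = 0 := by linear_combination hab
  rcases mul_eq_zero.1 key with h | h
  · exact hne (sub_eq_zero.1 h)
  · have h2 : (β:ℂ) * (a + b) = -c := by linear_combination h
    have h3 : ‖(β:ℂ) * (a + b)‖ = α := by rw [h2, norm_neg, habs]
    have h4 : ‖(β:ℂ) * (a + b)‖ ≤ β * 0.4 := by
      rw [norm_mul, abc_abs_small hβ]
      have : ‖a + b‖ ≤ 0.4 := by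
        have := (norm_add_le a b).trans (add_le_add (abc_memX ha) (abc_memX hb))
        linarith
      exact mul_le_mul_of_nonneg_left this hβ
    rw [h3] at h4
    linarith

/-- For all `z ∈ X`: `Re(−i φ₁′(z)) ≥ 0.21 > 0`, `Re(−i φ₂′(z)) ≥ 0.18 > 0`,
`Re(φ₃′(z)) ≥ 0.084 > 0`; and each of `φ₁, φ₂, φ₃` is injective on `X`. -/
theorem abcMaps_injOn :
    (∀ z ∈ abcX, 0.21 ≤ ((-I) * deriv abcMap1 z).re) ∧ (0 : ℝ) < 0.21 ∧
    (∀ z ∈ abcX, 0.18 ≤ ((-I) * deriv abcMap2 z).re) ∧ (0 : ℝ) < 0.18 ∧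
    (∀ z ∈ abcX, 0.084 ≤ (deriv abcMap3 z).re) ∧ (0 : ℝ) < 0.084 ∧
    Set.InjOn abcMap1 abcX ∧ Set.InjOn abcMap2 abcX ∧ Set.InjOn abcMap3 abcX := by
  refine ⟨?_, by norm_num, ?_, by norm_num, ?_, by norm_num, ?_, ?_, ?_⟩
  · intro z hz
    have him := abc_im hz
    rw [abc_d1]
    have : ((-I) * (0.25*I + 0.2*z)).re = 0.25 + 0.2 * z.im := by
      simp [Complex.mul_re, Complex.mul_im]
    rw [this]
    have := abs_le.1 him
    linarith [this.1]
  · intro z hz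
    have him := abc_im hz
    rw [abc_d2]
    have : ((-I) * (0.2*I + 0.1*z)).re = 0.2 + 0.1 * z.im := by
      simp [Complex.mul_re, Complex.mul_im]
    rw [this]
    have := abs_le.1 him
    linarith [this.1]
  · intro z hz
    have hre := abc_re hz
    rw [abc_d3]
    have : ((0.1 : ℂ) + 0.08*z).re = 0.1 + 0.08 * z.re := by
      simp [Complex.mul_re]
    rw [this]
    have := abs_le.1 hre
    linarith [this.1]
  · refine abc_inj 0.25 0.1 (0.25 * I) 0.1 (by norm_num) (by norm_num) (by norm_num) ?_
      abcMap1 ?_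
    · rw [norm_mul, abc_absC]; simp
    · intro z; unfold abcMap1; norm_num
  · refine abc_inj 0.2 0.05 (0.2 * I) (-0.1 - 0.1*I) (by norm_num) (by norm_num) (by norm_num) ?_
      abcMap2 ?_
    · rw [norm_mul, show (0.2:ℂ) = ((0.2:ℝ):ℂ) by norm_num, abc_abs_small (by norm_num)]
      simp
    · intro z; unfold abcMap2; norm_num; ring
  · refine abc_inj 0.1 0.04 (0.1 : ℂ) (0.1 - 0.1*I) (by norm_num) (by norm_num) (by norm_num) ?_
      abcMap3 ?_
    · rw [show (0.1:ℂ) = ((0.1:ℝ):ℂ) by norm_num, abc_abs_small (by norm_num)]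
    · intro z; unfold abcMap3; norm_num; ring
end
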